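/- Let μ₁, μ₂ be compactly supported Borel probability measures on ℝ such that for some ε > 0 and constant C, ∫_{2^k ≤ |ξ| ≤ 2^{k+1}} |μ̂_i(ξ)|² dξ ≤ C·2^{εk} for all k ≥ 0 and i = 1,2, and let ν satisfy |ν̂(ξ)| ≤ C|ξ|^{-σ} for |ξ| ≥ 1 with σ > ε. Then for all K ≥ 1, ∫_{|ξ|>2^K} |ν̂(ξ)μ̂₁(ξ)μ̂₂(ξ)| dξ ≤ C' · 2^{-(σ-ε)K} for some constant C'. -/

import Mathlib

open MeasureTheory Real
open ENNReal

/-- The Fourier transform of a measure on `ℝ`. -/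
noncomputable def ft (μ : Measure ℝ) (ξ : ℝ) : ℂ :=
  ∫ x, Complex.exp ((-2 * Real.pi * x * ξ : ℝ) * Complex.I) ∂μ

lemma ft_norm_le_one (μ : Measure ℝ) [IsProbabilityMeasure μ] (ξ : ℝ) : ‖ft μ ξ‖ ≤ 1 := by
  calc ‖ft μ ξ‖ ≤ ∫ x, ‖Complex.exp ((-2 * Real.pi * x * ξ : ℝ) * Complex.I)‖ ∂μ :=
        norm_integral_le_integral_norm _
    _ = ∫ _x, (1:ℝ) ∂μ := by
        refine integral_congr_ae (ae_of_all _ fun x => ?_)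
        simp [Complex.norm_exp]
    _ = 1 := by simp

lemma ft_continuous (μ : Measure ℝ) [IsProbabilityMeasure μ] : Continuous (ft μ) := by
  apply continuous_of_dominated (bound := fun _ => (1:ℝ))
  · intro ξ; exact (by fun_prop : Continuous fun x : ℝ =>
      Complex.exp ((-2 * Real.pi * x * ξ : ℝ) * Complex.I)).aestronglyMeasurable
  · intro ξ; filter_upwards with x; simp [Complex.norm_exp]
  · exact integrable_const 1
  · filter_upwards with x; fun_prop

/-- the closed dyadic annulus -/
def Ann (j : ℕ) : Set ℝ := {ξ : ℝ | 2 ^ j ≤ |ξ| ∧ |ξ| ≤ 2 ^ (j + 1)}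

lemma Ann_measurableSet (j : ℕ) : MeasurableSet (Ann j) :=
  (isClosed_Icc.preimage continuous_abs).measurableSet

lemma Ann_volume_lt_top (j : ℕ) : volume (Ann j) < ⊤ := by
  refine lt_of_le_of_lt (measure_mono ?_) (measure_Icc_lt_top (a := -(2^(j+1):ℝ)) (b := (2^(j+1):ℝ)))
  intro x hx
  exact abs_le.1 hx.2

lemma annulus_cover {K : ℕ} {ξ : ℝ} (h : (2:ℝ)^K < |ξ|) :
    ∃ k : ℕ, ξ ∈ Ann (K + k) := by
  have hξpos : (0:ℝ) < |ξ| := lt_of_lt_of_le (by positivity) h.le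
  have hlogK : (K:ℝ) < Real.logb 2 |ξ| := by
    have := Real.logb_lt_logb (b := 2) one_lt_two (by positivity : (0:ℝ) < 2^K) h
    rwa [← Real.rpow_natCast 2 K, Real.logb_rpow two_pos (by norm_num)] at this
  set m : ℤ := ⌊Real.logb 2 |ξ|⌋ with hm
  have hKm : (K:ℤ) ≤ m := Int.le_floor.2 (by exact_mod_cast hlogK.le)
  refine ⟨(m - K).toNat, ?_⟩
  have hmk : ((K:ℤ) + (m - K).toNat : ℤ) = m := by omega
  have heq : ((K + (m - K).toNat : ℕ) : ℝ) = (m : ℝ) := by exact_mod_cast congrArg (fun z : ℤ => (z:ℝ)) hmk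
  constructor
  · calc (2:ℝ) ^ (K + (m - K).toNat) = (2:ℝ) ^ ((K + (m - K).toNat : ℕ) : ℝ) :=
        (Real.rpow_natCast 2 _).symm
      _ = (2:ℝ) ^ (m:ℝ) := by rw [heq]
      _ ≤ (2:ℝ) ^ Real.logb 2 |ξ| :=
        Real.rpow_le_rpow_of_exponent_le one_le_two (Int.floor_le _)
      _ = |ξ| := Real.rpow_logb two_pos (by norm_num) hξpos
  · calc |ξ| = (2:ℝ) ^ Real.logb 2 |ξ| := (Real.rpow_logb two_pos (by norm_num) hξpos).symm
      _ ≤ (2:ℝ) ^ ((m:ℝ) + 1) :=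
        Real.rpow_le_rpow_of_exponent_le one_le_two (Int.lt_floor_add_one _).le
      _ = (2:ℝ) ^ (((K + (m - K).toNat + 1 : ℕ)) : ℝ) := by rw [show ((K + (m - K).toNat + 1 : ℕ) : ℝ) = (m:ℝ) + 1 by push_cast [heq]; push_cast at heq; linarith]
      _ = (2:ℝ) ^ (K + (m - K).toNat + 1) := Real.rpow_natCast 2 _

lemma annulus_sq_lintegral (μ : Measure ℝ) [IsProbabilityMeasure μ] {B : ℝ}
    (j : ℕ) (h : (∫ ξ in Ann j, ‖ft μ ξ‖ ^ 2) ≤ B) :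
    ∫⁻ ξ in Ann j, ENNReal.ofReal (‖ft μ ξ‖) ^ (2:ℝ) ≤ ENNReal.ofReal B := by
  have hmeas : Continuous fun ξ => ‖ft μ ξ‖ ^ 2 := by
    have := ft_continuous μ; fun_prop
  haveI : Fact (volume (Ann j) < ⊤) := ⟨Ann_volume_lt_top j⟩
  have hInt : IntegrableOn (fun ξ => ‖ft μ ξ‖ ^ 2) (Ann j) := by
    refine (integrable_const (1:ℝ)).mono' hmeas.aestronglyMeasurable ?_
    filter_upwards with x
    rw [Real.norm_eq_abs, abs_of_nonneg (by positivity)]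
    exact pow_le_one₀ (norm_nonneg _) (ft_norm_le_one μ x)
  have key : ∫⁻ ξ in Ann j, ENNReal.ofReal (‖ft μ ξ‖ ^ 2) = ENNReal.ofReal (∫ ξ in Ann j, ‖ft μ ξ‖ ^ 2) :=
    (ofReal_integral_eq_lintegral_ofReal hInt (ae_of_all _ fun x => by positivity)).symm
  calc ∫⁻ ξ in Ann j, ENNReal.ofReal (‖ft μ ξ‖) ^ (2:ℝ)
      = ∫⁻ ξ in Ann j, ENNReal.ofReal (‖ft μ ξ‖ ^ 2) := by
        refine lintegral_congr fun ξ => ?_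
        rw [← Real.rpow_natCast ‖ft μ ξ‖ 2, ← ENNReal.ofReal_rpow_of_nonneg (norm_nonneg _) (by norm_num)]
        norm_num
    _ = ENNReal.ofReal (∫ ξ in Ann j, ‖ft μ ξ‖ ^ 2) := key
    _ ≤ ENNReal.ofReal B := ENNReal.ofReal_le_ofReal h

/-- Dyadic annulus bound: if `μ₁, μ₂` have `∫_{2^k ≤ |ξ| ≤ 2^{k+1}} |μ̂_i|² ≤ C·2^{εk}` and
`|ν̂(ξ)| ≤ C|ξ|^{-σ}` for `|ξ| ≥ 1` with `σ > ε`, then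
`∫_{|ξ| > 2^K} |ν̂ μ̂₁ μ̂₂| ≤ C'·2^{-(σ-ε)K}` for all `K ≥ 1`. -/
theorem dyadic_tail_bound (ν μ₁ μ₂ : Measure ℝ)
    [IsProbabilityMeasure ν] [IsProbabilityMeasure μ₁] [IsProbabilityMeasure μ₂]
    (hμ₁c : ∃ K : Set ℝ, IsCompact K ∧ μ₁ Kᶜ = 0)
    (hμ₂c : ∃ K : Set ℝ, IsCompact K ∧ μ₂ Kᶜ = 0)
    (ε σ C : ℝ) (hε : 0 < ε) (hσ : ε < σ) (hC : 0 < C)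
    (h1 : ∀ k : ℕ, (∫ ξ in {ξ : ℝ | 2 ^ k ≤ |ξ| ∧ |ξ| ≤ 2 ^ (k + 1)}, ‖ft μ₁ ξ‖ ^ 2)
      ≤ C * 2 ^ (ε * k))
    (h2 : ∀ k : ℕ, (∫ ξ in {ξ : ℝ | 2 ^ k ≤ |ξ| ∧ |ξ| ≤ 2 ^ (k + 1)}, ‖ft μ₂ ξ‖ ^ 2)
      ≤ C * 2 ^ (ε * k))
    (hν : ∀ ξ : ℝ, 1 ≤ |ξ| → ‖ft ν ξ‖ ≤ C * |ξ| ^ (-σ)) :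
    ∃ C' > (0:ℝ), ∀ K : ℕ, 1 ≤ K →
      (∫ ξ in {ξ : ℝ | (2:ℝ) ^ K < |ξ|}, ‖ft ν ξ‖ * ‖ft μ₁ ξ‖ * ‖ft μ₂ ξ‖)
        ≤ C' * 2 ^ (-(σ - ε) * K) := by
  have h22 : Real.HolderConjugate 2 2 := Real.HolderConjugate.two_two
  have hr1 : (2:ℝ) ^ (ε - σ) < 1 := Real.rpow_lt_one_of_one_lt_of_neg one_lt_two (by linarith)
  have hr0 : (0:ℝ) < (2:ℝ) ^ (ε - σ) := Real.rpow_pos_of_pos two_pos _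
  have hone_sub : (0:ℝ) < 1 - 2 ^ (ε - σ) := by linarith
  refine ⟨C ^ 2 * (1 - 2 ^ (ε - σ))⁻¹, by positivity, fun K hK => ?_⟩
  have hfc : Continuous fun ξ => ‖ft ν ξ‖ * ‖ft μ₁ ξ‖ * ‖ft μ₂ ξ‖ := by
    have := ft_continuous ν; have := ft_continuous μ₁; have := ft_continuous μ₂; fun_prop
  -- per-annulus bound
  have hann : ∀ j : ℕ, 1 ≤ j →
      (∫⁻ ξ in Ann j, ENNReal.ofReal (‖ft ν ξ‖ * ‖ft μ₁ ξ‖ * ‖ft μ₂ ξ‖))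
        ≤ ENNReal.ofReal (C ^ 2 * 2 ^ ((ε - σ) * j)) := by
    intro j hj
    have hm1 : AEMeasurable (fun ξ => ENNReal.ofReal ‖ft μ₁ ξ‖) (volume.restrict (Ann j)) :=
      (ENNReal.continuous_ofReal.comp (ft_continuous μ₁).norm).measurable.aemeasurable
    have hm2 : AEMeasurable (fun ξ => ENNReal.ofReal ‖ft μ₂ ξ‖) (volume.restrict (Ann j)) :=
      (ENNReal.continuous_ofReal.comp (ft_continuous μ₂).norm).measurable.aemeasurable
    have hpow : ((2:ℝ) ^ j) ^ (-σ) = 2 ^ (-σ * (j:ℝ)) := by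
      rw [← Real.rpow_natCast 2 j, ← Real.rpow_mul two_pos.le, mul_comm]
    have hstep1 : ∀ ξ ∈ Ann j, ENNReal.ofReal (‖ft ν ξ‖ * ‖ft μ₁ ξ‖ * ‖ft μ₂ ξ‖) ≤
        ENNReal.ofReal (C * 2 ^ (-σ * (j:ℝ))) *
          (ENNReal.ofReal ‖ft μ₁ ξ‖ * ENNReal.ofReal ‖ft μ₂ ξ‖) := by
      intro ξ hξ
      have h2j : (1:ℝ) ≤ 2 ^ j := one_le_pow₀ one_le_two
      have h1ξ : (1:ℝ) ≤ |ξ| := le_trans h2j hξ.1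
      have hν' : ‖ft ν ξ‖ ≤ C * 2 ^ (-σ * (j:ℝ)) := by
        refine (hν ξ h1ξ).trans ?_
        rw [← hpow]
        exact mul_le_mul_of_nonneg_left
          (Real.rpow_le_rpow_of_nonpos (by positivity) hξ.1 (by linarith)) hC.le
      rw [← ENNReal.ofReal_mul (by positivity), ← ENNReal.ofReal_mul (by positivity)]
      refine ENNReal.ofReal_le_ofReal ?_
      calc ‖ft ν ξ‖ * ‖ft μ₁ ξ‖ * ‖ft μ₂ ξ‖
          ≤ (C * 2 ^ (-σ * (j:ℝ))) * ‖ft μ₁ ξ‖ * ‖ft μ₂ ξ‖ := by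
            gcongr
        _ = C * 2 ^ (-σ * (j:ℝ)) * (‖ft μ₁ ξ‖ * ‖ft μ₂ ξ‖) := by ring
    have harith : C * 2 ^ (-σ * (j:ℝ)) * (C * 2 ^ (ε * (j:ℝ))) = C ^ 2 * 2 ^ ((ε - σ) * (j:ℝ)) := by
      rw [show C * 2 ^ (-σ * (j:ℝ)) * (C * 2 ^ (ε * (j:ℝ)))
          = C ^ 2 * (2 ^ (-σ * (j:ℝ)) * 2 ^ (ε * (j:ℝ))) by ring,
        ← Real.rpow_add two_pos]
      ring_nf
    set X : ℝ≥0∞ := ENNReal.ofReal (C * 2 ^ (ε * (j:ℝ))) with hX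
    have hX0 : X ≠ 0 := by
      rw [hX]; simp only [ne_eq, ENNReal.ofReal_eq_zero, not_le]; positivity
    calc (∫⁻ ξ in Ann j, ENNReal.ofReal (‖ft ν ξ‖ * ‖ft μ₁ ξ‖ * ‖ft μ₂ ξ‖))
        ≤ ∫⁻ ξ in Ann j, ENNReal.ofReal (C * 2 ^ (-σ * (j:ℝ))) *
            (ENNReal.ofReal ‖ft μ₁ ξ‖ * ENNReal.ofReal ‖ft μ₂ ξ‖) := by
          refine setLIntegral_mono ?_ hstep1
          exact (measurable_const.mul (((ENNReal.continuous_ofReal.comp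
            (ft_continuous μ₁).norm).measurable).mul ((ENNReal.continuous_ofReal.comp
            (ft_continuous μ₂).norm).measurable)))
      _ = ENNReal.ofReal (C * 2 ^ (-σ * (j:ℝ))) *
            ∫⁻ ξ in Ann j, ENNReal.ofReal ‖ft μ₁ ξ‖ * ENNReal.ofReal ‖ft μ₂ ξ‖ :=
          lintegral_const_mul' _ _ ENNReal.ofReal_ne_top
      _ ≤ ENNReal.ofReal (C * 2 ^ (-σ * (j:ℝ))) *
            ((∫⁻ ξ in Ann j, ENNReal.ofReal ‖ft μ₁ ξ‖ ^ (2:ℝ)) ^ (1/(2:ℝ)) *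
             (∫⁻ ξ in Ann j, ENNReal.ofReal ‖ft μ₂ ξ‖ ^ (2:ℝ)) ^ (1/(2:ℝ))) :=
          mul_le_mul_right (ENNReal.lintegral_mul_le_Lp_mul_Lq _ h22 hm1 hm2) _
      _ ≤ ENNReal.ofReal (C * 2 ^ (-σ * (j:ℝ))) * (X ^ (1/(2:ℝ)) * X ^ (1/(2:ℝ))) := by
          gcongr
          · exact annulus_sq_lintegral μ₁ j (h1 j)
          · exact annulus_sq_lintegral μ₂ j (h2 j)
      _ = ENNReal.ofReal (C * 2 ^ (-σ * (j:ℝ))) * X := by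
          rw [← ENNReal.rpow_add _ _ hX0 ENNReal.ofReal_ne_top]
          norm_num
      _ = ENNReal.ofReal (C ^ 2 * 2 ^ ((ε - σ) * (j:ℝ))) := by
          rw [hX, ← ENNReal.ofReal_mul (by positivity), harith]
  -- the tail
  have hnn : 0 ≤ᵐ[volume.restrict {ξ : ℝ | (2:ℝ) ^ K < |ξ|}]
      fun ξ => ‖ft ν ξ‖ * ‖ft μ₁ ξ‖ * ‖ft μ₂ ξ‖ := ae_of_all _ fun ξ => by positivity
  rw [integral_eq_lintegral_of_nonneg_ae hnn hfc.aestronglyMeasurable]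
  refine ENNReal.toReal_le_of_le_ofReal (by positivity) ?_
  have hterm : ∀ k : ℕ, C ^ 2 * 2 ^ ((ε - σ) * ((K + k : ℕ) : ℝ))
      = (C ^ 2 * 2 ^ ((ε - σ) * (K:ℝ))) * ((2:ℝ) ^ (ε - σ)) ^ k := by
    intro k
    rw [mul_assoc]
    congr 1
    push_cast
    rw [mul_add, Real.rpow_add two_pos]
    congr 1
    rw [← Real.rpow_natCast ((2:ℝ) ^ (ε - σ)) k, ← Real.rpow_mul two_pos.le]
  calc (∫⁻ ξ in {ξ : ℝ | (2:ℝ) ^ K < |ξ|},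
        ENNReal.ofReal (‖ft ν ξ‖ * ‖ft μ₁ ξ‖ * ‖ft μ₂ ξ‖))
      ≤ ∫⁻ ξ in ⋃ k : ℕ, Ann (K + k),
          ENNReal.ofReal (‖ft ν ξ‖ * ‖ft μ₁ ξ‖ * ‖ft μ₂ ξ‖) := by
        refine lintegral_mono_set fun ξ hξ => ?_
        obtain ⟨k, hk⟩ := annulus_cover hξ
        exact Set.mem_iUnion.2 ⟨k, hk⟩
    _ ≤ ∑' k : ℕ, ∫⁻ ξ in Ann (K + k),
          ENNReal.ofReal (‖ft ν ξ‖ * ‖ft μ₁ ξ‖ * ‖ft μ₂ ξ‖) :=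
        lintegral_iUnion_le _ _
    _ ≤ ∑' k : ℕ, ENNReal.ofReal (C ^ 2 * 2 ^ ((ε - σ) * ((K + k : ℕ) : ℝ))) :=
        ENNReal.tsum_le_tsum fun k => hann (K + k) (le_trans hK (Nat.le_add_right _ _))
    _ = ∑' k : ℕ, ENNReal.ofReal (C ^ 2 * 2 ^ ((ε - σ) * (K:ℝ))) *
          (ENNReal.ofReal ((2:ℝ) ^ (ε - σ))) ^ k := by
        refine tsum_congr fun k => ?_
        rw [hterm k, ENNReal.ofReal_mul (by positivity), ENNReal.ofReal_pow hr0.le]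
    _ = ENNReal.ofReal (C ^ 2 * 2 ^ ((ε - σ) * (K:ℝ))) *
          (1 - ENNReal.ofReal ((2:ℝ) ^ (ε - σ)))⁻¹ := by
        rw [ENNReal.tsum_mul_left, ENNReal.tsum_geometric]
    _ = ENNReal.ofReal (C ^ 2 * (1 - 2 ^ (ε - σ))⁻¹ * 2 ^ (-(σ - ε) * (K:ℝ))) := by
        rw [show (1:ℝ≥0∞) - ENNReal.ofReal ((2:ℝ) ^ (ε - σ))
            = ENNReal.ofReal (1 - 2 ^ (ε - σ)) by
          rw [ENNReal.ofReal_sub _ hr0.le, ENNReal.ofReal_one],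
          ← ENNReal.ofReal_inv_of_pos hone_sub,
          ← ENNReal.ofReal_mul (by positivity)]
        congr 1
        rw [show -(σ - ε) * (K:ℝ) = (ε - σ) * (K:ℝ) by ring]
        ring
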